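/- There exist a compact metrizable topological space T with a compatible metric d, a countable subset T₀ ⊆ T, and a function g : ℝ → T with range contained in T₀, such that for every x ∈ ℝ there exists δ > 0 for which the set {s ∈ ℝ : d(g(x - s), g(x + s)) < δ} is finite. -/
import Mathlib
set_option linter.unusedSectionVars false

noncomputable section
open Classical

namespace SymmAux

/-- enumeration of the rationals -/
def eQ : ℚ ≃ ℕ := Denumerable.eqv ℚ

def rQ (m : ℕ) : ℚ := eQ.symm m

@[simp] lemma rQ_eQ (q : ℚ) : rQ (eQ q) = q := eQ.symm_apply_apply q

lemma sign_self_eq_sign_neg {a : ℚ} (h : SignType.sign a = SignType.sign (-a)) : a = 0 := by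
  rw [Left.sign_neg] at h
  have : SignType.sign a = 0 := by
    have h2 : ∀ s : SignType, s = -s → s = 0 := by decide
    exact h2 _ h
  exact sign_eq_zero_iff.mp this

/-- data attached to one class at level `i` : for each of the two anchors,
the sign grid and the capped enumeration index of the coefficient. -/
abbrev CData (i : ℕ) : Type :=
  ((Fin (i+1) → SignType) × Fin (i+1)) × ((Fin (i+1) → SignType) × Fin (i+1))

abbrev SpaceF (i : ℕ) : Type := (Fin i → Bool) → Option (CData i)

instance (i : ℕ) : UniformSpace (SpaceF i) := ⊥

abbrev T : Type := ∀ i, SpaceF i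

def metricT : MetricSpace T := PiNat.metricSpaceOfDiscreteUniformity (fun _ => rfl)

section Core

variable {ι : Type} [LinearOrder ι] (c : ι ↪ (ℕ → Bool))

/-- the class of `σ` : support elements whose code starts with `σ`. -/
def cls (u : ι →₀ ℚ) (i : ℕ) (σ : Fin i → Bool) : Finset ι :=
  u.support.filter (fun h => ∀ j : Fin i, c h j.val = σ j)

lemma mem_cls {u : ι →₀ ℚ} {i : ℕ} {σ : Fin i → Bool} {a : ι} :
    a ∈ cls c u i σ ↔ a ∈ u.support ∧ ∀ j : Fin i, c a j.val = σ j := by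
  simp [cls]

lemma self_mem_cls {u : ι →₀ ℚ} {a : ι} (ha : a ∈ u.support) (i : ℕ) :
    a ∈ cls c u i (fun j => c a j.val) := (mem_cls c).mpr ⟨ha, fun _ => rfl⟩

lemma exists_code_diff {a b : ι} (hab : a ≠ b) : ∃ j, c a j ≠ c b j := by
  by_contra hcon
  push_neg at hcon
  exact hab (c.injective (funext hcon))

/-- separation level of a pair -/
def pairSep (a b : ι) : ℕ :=
  if hab : a = b then 0 else Nat.find (exists_code_diff c hab) + 1

/-- separation level of a finitely supported function: beyond this level,
codes of distinct support elements differ. -/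
def sep (u : ι →₀ ℚ) : ℕ := (u.support ×ˢ u.support).sup (fun p => pairSep c p.1 p.2)

lemma sep_spec {u : ι →₀ ℚ} {a b : ι} (ha : a ∈ u.support) (hb : b ∈ u.support) {i : ℕ}
    (hi : sep c u ≤ i) (hagree : ∀ j : Fin i, c a j.val = c b j.val) : a = b := by
  by_contra hab
  have hfind := Nat.find_spec (exists_code_diff c hab)
  have hle : pairSep c a b ≤ sep c u := by
    apply Finset.le_sup (f := fun p => pairSep c p.1 p.2)
      (b := ((a, b) : ι × ι))
    exact Finset.mem_product.mpr ⟨ha, hb⟩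
  have hlt : Nat.find (exists_code_diff c hab) < i := by
    have : pairSep c a b = Nat.find (exists_code_diff c hab) + 1 := dif_neg hab
    omega
  exact hfind (hagree ⟨_, hlt⟩)

/-- sup of enumeration indices of the coefficients -/
def supE (u : ι →₀ ℚ) : ℕ := u.support.sup (fun h => eQ (u h))

lemma supE_spec {u : ι →₀ ℚ} {a : ι} (ha : a ∈ u.support) : eQ (u a) ≤ supE u :=
  Finset.le_sup (f := fun h => eQ (u h)) ha

/-- the cut-off level of `u` -/
def Mu (u : ι →₀ ℚ) : ℕ := sep c u + supE u + eQ 0 + 2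

lemma two_le_Mu (u : ι →₀ ℚ) : 2 ≤ Mu c u := by unfold Mu; omega

/-- anchor data : sign grid and capped coefficient index -/
def aData (i : ℕ) (u : ι →₀ ℚ) (t : ι) : (Fin (i+1) → SignType) × Fin (i+1) :=
  (fun m => SignType.sign (u t - rQ m.val / 2),
   ⟨min (eQ (u t)) i, Nat.lt_succ_of_le (Nat.min_le_right _ _)⟩)

def cData (u : ι →₀ ℚ) (i : ℕ) (σ : Fin i → Bool) : Option (CData i) :=
  if h : (cls c u i σ).Nonempty then
    some (aData i u ((cls c u i σ).min' h), aData i u ((cls c u i σ).max' h))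
  else none

def fdef (u : ι →₀ ℚ) : T :=
  fun i => if i < Mu c u then (fun σ => cData c u i σ) else (fun _ => none)

lemma fdef_eval {u : ι →₀ ℚ} {i : ℕ} (hi : i < Mu c u) :
    fdef c u i = fun σ => cData c u i σ := if_pos hi

lemma fdef_eval_none {u : ι →₀ ℚ} {i : ℕ} (hi : ¬ i < Mu c u) :
    fdef c u i = fun _ => none := if_neg hi

lemma fdef_ne_none {u : ι →₀ ℚ} (hu : u ≠ 0) {i : ℕ} (hi : i < Mu c u) :
    fdef c u i ≠ (fun _ => none) := by
  obtain ⟨a, ha⟩ := Finsupp.support_nonempty_iff.mpr hu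
  intro hcon
  have h1 : cData c u i (fun j => c a j.val) = none := by
    have h0 := congrFun hcon (fun j => c a j.val)
    rw [fdef_eval c hi] at h0
    exact h0
  unfold cData at h1
  rw [dif_pos ⟨a, self_mem_cls c ha i⟩] at h1
  exact Option.some_ne_none _ h1

lemma M_pattern {u v : ι →₀ ℚ} (hu : u ≠ 0) (hv : v ≠ 0) {n : ℕ}
    (h : ∀ i ≤ n, fdef c u i = fdef c v i) :
    (Mu c u = Mu c v ∧ Mu c u ≤ n) ∨ (n < Mu c u ∧ n < Mu c v) := by
  have aux : ∀ (p q : ι →₀ ℚ), q ≠ 0 → (∀ i ≤ n, fdef c p i = fdef c q i) →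
      Mu c p ≤ n → Mu c q ≤ Mu c p := by
    intro p q hq hpq hpn
    by_contra hcon
    push_neg at hcon
    have h1 : fdef c p (Mu c p) = fun _ => none := fdef_eval_none c (lt_irrefl _)
    have h2 := hpq (Mu c p) hpn
    rw [h1] at h2
    exact fdef_ne_none c hq hcon h2.symm
  by_cases hun : Mu c u ≤ n
  · left
    have h1 : Mu c v ≤ Mu c u := aux u v hv h hun
    have h2 : Mu c u ≤ Mu c v :=
      aux v u hu (fun i hi => (h i hi).symm) (le_trans h1 hun)
    exact ⟨le_antisymm h2 h1, hun⟩
  · right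
    push_neg at hun
    refine ⟨hun, ?_⟩
    by_contra hvn
    push_neg at hvn
    have := aux v u hu (fun i hi => (h i hi).symm) hvn
    omega


lemma cls_eq_singleton_of_sep {u : ι →₀ ℚ} {i : ℕ} (hsep : sep c u ≤ i) {σ : Fin i → Bool}
    {a : ι} (ha : a ∈ cls c u i σ) : cls c u i σ = {a} := by
  apply Finset.eq_singleton_iff_unique_mem.mpr
  refine ⟨ha, fun x hx => ?_⟩
  obtain ⟨hxs, hxc⟩ := (mem_cls c).mp hx
  obtain ⟨has, hac⟩ := (mem_cls c).mp ha
  exact sep_spec c hxs has hsep (fun j => (hxc j).trans (hac j).symm)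

lemma cData_some {u : ι →₀ ℚ} {i : ℕ} {σ : Fin i → Bool} (hne : (cls c u i σ).Nonempty) :
    cData c u i σ =
      some (aData i u ((cls c u i σ).min' hne), aData i u ((cls c u i σ).max' hne)) := by
  unfold cData
  rw [dif_pos hne]

lemma cData_singleton {u : ι →₀ ℚ} {i : ℕ} {σ : Fin i → Bool} {a : ι}
    (hcls : cls c u i σ = {a}) : cData c u i σ = some (aData i u a, aData i u a) := by
  have hne : (cls c u i σ).Nonempty := hcls ▸ Finset.singleton_nonempty a
  rw [cData_some c hne]
  have uniq : ∀ x, x ∈ cls c u i σ → x = a := by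
    intro x hx
    have : x ∈ ({a} : Finset ι) := by rw [← hcls]; exact hx
    exact Finset.mem_singleton.mp this
  have h1 : (cls c u i σ).min' hne = a := uniq _ (Finset.min'_mem _ hne)
  have h2 : (cls c u i σ).max' hne = a := uniq _ (Finset.max'_mem _ hne)
  rw [h1, h2]

lemma cls_nonempty_of_cData {u w : ι →₀ ℚ} {i : ℕ} {σ : Fin i → Bool}
    (hne : (cls c u i σ).Nonempty) (hd : cData c u i σ = cData c w i σ) :
    (cls c w i σ).Nonempty := by
  by_contra hcon
  rw [cData_some c hne] at hd
  unfold cData at hd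
  rw [dif_neg hcon] at hd
  exact Option.some_ne_none _ hd

lemma aData_sign {i : ℕ} {u v : ι →₀ ℚ} {t t' : ι}
    (h : aData i u t = aData i v t') {m : ℕ} (hm : m ≤ i) :
    SignType.sign (u t - rQ m / 2) = SignType.sign (v t' - rQ m / 2) :=
  congrFun (congrArg Prod.fst h) ⟨m, by omega⟩

lemma aData_sign0 {i : ℕ} {u v : ι →₀ ℚ} {t t' : ι}
    (h : aData i u t = aData i v t') (hm : eQ 0 ≤ i) :
    SignType.sign (u t) = SignType.sign (v t') := by
  have := aData_sign h hm (m := eQ 0)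
  rw [rQ_eQ] at this
  simpa using this

lemma grid_contra {y u : ι →₀ ℚ} {q : ι} (hqS : q ∉ y.support) (hq : q ∈ u.support)
    (hsg : SignType.sign (u q) = SignType.sign ((y - u) q)) : False := by
  have hyq : y q = 0 := Finsupp.notMem_support_iff.mp hqS
  have h1 : (y - u) q = -(u q) := by
    rw [Finsupp.sub_apply, hyq]; ring
  rw [h1] at hsg
  exact (Finsupp.mem_support_iff.mp hq) (sign_self_eq_sign_neg hsg)

lemma S_unique {y : ι →₀ ℚ} {i : ℕ} (hsepY : sep c y ≤ i) {σ : Fin i → Bool} {s s' : ι}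
    (hs : s ∈ y.support) (hs' : s' ∈ y.support)
    (hcs : ∀ j : Fin i, c s j.val = σ j) (hcs' : ∀ j : Fin i, c s' j.val = σ j) : s = s' :=
  sep_spec c hs hs' hsepY (fun j => (hcs j).trans (hcs' j).symm)

lemma off_mem_cls {y u : ι →₀ ℚ} {i : ℕ} {σ : Fin i → Bool} {h : ι} (hS : h ∉ y.support) :
    (h ∈ cls c u i σ ↔ h ∈ cls c (y - u) i σ) := by
  have hyh : y h = 0 := Finsupp.notMem_support_iff.mp hS
  simp only [mem_cls, Finsupp.mem_support_iff, Finsupp.sub_apply, hyh, zero_sub, neg_ne_zero]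

/-- Oriented contradiction: an element of `y.support` lying in the `u`-class but not
the `(y-u)`-class is impossible. -/
lemma big_oriented {y u : ι →₀ ℚ} {i : ℕ}
    (hsepY : sep c y ≤ i) (hm0 : eQ 0 ≤ i) {σ : Fin i → Bool}
    (hXne : (cls c u i σ).Nonempty) (hYne : (cls c (y - u) i σ).Nonempty)
    (hd : cData c u i σ = cData c (y - u) i σ)
    {s : ι} (hsX : s ∈ cls c u i σ) (hsY : s ∉ cls c (y - u) i σ)
    (hsS : s ∈ y.support) : False := by
  have hY : cls c (y - u) i σ = (cls c u i σ).erase s := by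
    ext h'
    constructor
    · intro hh
      have hhne : h' ≠ s := fun e => hsY (e ▸ hh)
      refine Finset.mem_erase.mpr ⟨hhne, ?_⟩
      by_cases hhS : h' ∈ y.support
      · exact absurd
          (S_unique c hsepY hhS hsS ((mem_cls c).mp hh).2 ((mem_cls c).mp hsX).2) hhne
      · exact (off_mem_cls c hhS).mpr hh
    · intro hh
      obtain ⟨hhne, hhX⟩ := Finset.mem_erase.mp hh
      by_cases hhS : h' ∈ y.support
      · exact absurd
          (S_unique c hsepY hhS hsS ((mem_cls c).mp hhX).2 ((mem_cls c).mp hsX).2) hhne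
      · exact (off_mem_cls c hhS).mp hhX
  have hYsubX : cls c (y - u) i σ ⊆ cls c u i σ := by
    rw [hY]; exact Finset.erase_subset _ _
  have hYnoS : ∀ h' ∈ cls c (y - u) i σ, h' ∉ y.support := by
    intro h' hh hhS
    have he : h' = s :=
      S_unique c hsepY hhS hsS ((mem_cls c).mp hh).2 ((mem_cls c).mp hsX).2
    exact hsY (he ▸ hh)
  rw [cData_some c hXne, cData_some c hYne] at hd
  have hp := Option.some.inj hd
  have hmin := aData_sign0 (congrArg Prod.fst hp) hm0
  have hmax := aData_sign0 (congrArg Prod.snd hp) hm0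
  set tmin := (cls c u i σ).min' hXne with htmin
  set tmax := (cls c u i σ).max' hXne with htmax
  set smin := (cls c (y - u) i σ).min' hYne with hsmin
  set smax := (cls c (y - u) i σ).max' hYne with hsmax
  have hsmaxY : smax ∈ cls c (y - u) i σ := Finset.max'_mem _ _
  have hsminY : smin ∈ cls c (y - u) i σ := Finset.min'_mem _ _
  by_cases hmm : tmax = smax
  · apply grid_contra (hYnoS smax hsmaxY) ((mem_cls c).mp (hYsubX hsmaxY)).1
    rw [hmm] at hmax; exact hmax
  · by_cases hmm' : tmin = smin
    · apply grid_contra (hYnoS smin hsminY) ((mem_cls c).mp (hYsubX hsminY)).1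
      rw [hmm'] at hmin; exact hmin
    · have htmaxs : tmax = s := by
        by_contra hne
        have h1 : tmax ∈ cls c (y - u) i σ := by
          rw [hY]; exact Finset.mem_erase.mpr ⟨hne, Finset.max'_mem _ _⟩
        have h2 : tmax ≤ smax := Finset.le_max' _ _ h1
        have h3 : smax ≤ tmax := Finset.le_max' _ _ (hYsubX hsmaxY)
        exact hmm (le_antisymm h2 h3)
      have htmins : tmin = s := by
        by_contra hne
        have h1 : tmin ∈ cls c (y - u) i σ := by
          rw [hY]; exact Finset.mem_erase.mpr ⟨hne, Finset.min'_mem _ _⟩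
        have h2 : smin ≤ tmin := Finset.min'_le _ _ h1
        have h3 : tmin ≤ smin := Finset.min'_le _ _ (hYsubX hsminY)
        exact hmm' (le_antisymm h3 h2)
      have : smin = s := by
        have h1 : tmin ≤ smin := Finset.min'_le _ _ (hYsubX hsminY)
        have h2 : smin ≤ tmax := Finset.le_max' _ _ (hYsubX hsminY)
        rw [htmins] at h1
        rw [htmaxs] at h2
        exact le_antisymm h2 h1
      exact hsY (this ▸ hsminY)

/-- Every element of either class lies in the support of `y`. -/
lemma big_main {y u : ι →₀ ℚ} {i : ℕ}
    (hsepY : sep c y ≤ i) (hm0 : eQ 0 ≤ i) {σ : Fin i → Bool}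
    (hXne : (cls c u i σ).Nonempty) (hYne : (cls c (y - u) i σ).Nonempty)
    (hd : cData c u i σ = cData c (y - u) i σ) :
    ∀ d, (d ∈ cls c u i σ ∨ d ∈ cls c (y - u) i σ) → d ∈ y.support := by
  intro d hdmem
  by_contra hdS
  have hsub2 : y - (y - u) = u := sub_sub_cancel y u
  by_cases hXY : cls c u i σ = cls c (y - u) i σ
  · rw [cData_some c hXne, cData_some c hYne] at hd
    have hp := Option.some.inj hd
    have hmin := aData_sign0 (congrArg Prod.fst hp) hm0
    have hmax := aData_sign0 (congrArg Prod.snd hp) hm0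
    have hminEq : (cls c (y - u) i σ).min' hYne = (cls c u i σ).min' hXne := by
      simp_rw [← hXY]
    have hmaxEq : (cls c (y - u) i σ).max' hYne = (cls c u i σ).max' hXne := by
      simp_rw [← hXY]
    set tmin := (cls c u i σ).min' hXne
    set tmax := (cls c u i σ).max' hXne
    rw [hminEq] at hmin
    rw [hmaxEq] at hmax
    have htminX : tmin ∈ cls c u i σ := Finset.min'_mem _ _
    have htmaxX : tmax ∈ cls c u i σ := Finset.max'_mem _ _
    by_cases h1 : tmin ∈ y.support
    · by_cases h2 : tmax ∈ y.support
      · -- all elements of the class are equal, so `d` is in `y.support`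
        have he : tmin = tmax :=
          S_unique c hsepY h1 h2 ((mem_cls c).mp htminX).2 ((mem_cls c).mp htmaxX).2
        have hdX : d ∈ cls c u i σ := by
          rcases hdmem with h | h
          · exact h
          · exact hXY ▸ h
        have : d = tmin := by
          have ha : tmin ≤ d := Finset.min'_le _ _ hdX
          have hb : d ≤ tmax := Finset.le_max' _ _ hdX
          rw [← he] at hb
          exact le_antisymm hb ha
        exact hdS (this ▸ h1)
      · exact grid_contra h2 ((mem_cls c).mp htmaxX).1 hmax
    · exact grid_contra h1 ((mem_cls c).mp htminX).1 hmin
  · have : ∃ s, (s ∈ cls c u i σ ∧ s ∉ cls c (y - u) i σ) ∨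
        (s ∈ cls c (y - u) i σ ∧ s ∉ cls c u i σ) := by
      by_contra hcon
      push_neg at hcon
      apply hXY
      ext t
      exact ⟨fun ht => (hcon t).1 ht, fun ht => (hcon t).2 ht⟩
    obtain ⟨s, hs⟩ := this
    rcases hs with ⟨hs1, hs2⟩ | ⟨hs1, hs2⟩
    · have hsS : s ∈ y.support := by
        by_contra hcon
        exact hs2 ((off_mem_cls c hcon).mp hs1)
      exact big_oriented c hsepY hm0 hXne hYne hd hs1 hs2 hsS
    · have hsS : s ∈ y.support := by
        by_contra hcon
        apply hs2
        have h' := (off_mem_cls c (u := y - u) hcon).mp hs1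
        rwa [hsub2] at h'
      have hYne' : (cls c (y - (y - u)) i σ).Nonempty := by rw [hsub2]; exact hXne
      apply big_oriented c hsepY hm0 (u := y - u) hYne hYne' (σ := σ) ?_ hs1 ?_ hsS
      · rw [hsub2]; exact hd.symm
      · rw [hsub2]; exact hs2


lemma big_case {y u : ι →₀ ℚ} {i : ℕ}
    (hsepY : sep c y ≤ i) (hm0 : eQ 0 ≤ i)
    (heY : ∀ b ∈ y.support, eQ (y b) ≤ i)
    (hdata : ∀ σ : Fin i → Bool, cData c u i σ = cData c (y - u) i σ)
    {a : ι} (ha : a ∈ u.support) :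
    a ∈ y.support ∧ (u a = y a / 2 ∨ ∃ b ∈ y.support, u a = y b) := by
  set σa : Fin i → Bool := fun j => c a j.val with hσa
  have haX : a ∈ cls c u i σa := self_mem_cls c ha i
  have hXne : (cls c u i σa).Nonempty := ⟨a, haX⟩
  have hd := hdata σa
  have hYne : (cls c (y - u) i σa).Nonempty := cls_nonempty_of_cData c hXne hd
  have hsub := big_main c hsepY hm0 hXne hYne hd
  have haS : a ∈ y.support := hsub a (Or.inl haX)
  have hXall : ∀ x ∈ cls c u i σa, x = a := by
    intro x hx
    exact S_unique c hsepY (hsub x (Or.inl hx)) haS ((mem_cls c).mp hx).2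
      ((mem_cls c).mp haX).2
  have hYall : ∀ x ∈ cls c (y - u) i σa, x = a := by
    intro x hx
    exact S_unique c hsepY (hsub x (Or.inr hx)) haS ((mem_cls c).mp hx).2
      ((mem_cls c).mp haX).2
  rw [cData_some c hXne, cData_some c hYne] at hd
  have hp := Option.some.inj hd
  have hminu : (cls c u i σa).min' hXne = a := hXall _ (Finset.min'_mem _ _)
  have hminv : (cls c (y - u) i σa).min' hYne = a := hYall _ (Finset.min'_mem _ _)
  have hsg := aData_sign (congrArg Prod.fst hp) (heY a haS) (m := eQ (y a))
  rw [hminu, hminv, rQ_eQ] at hsg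
  have harg : (y - u) a - y a / 2 = -(u a - y a / 2) := by
    rw [Finsupp.sub_apply]; ring
  rw [harg] at hsg
  have hzero : u a - y a / 2 = 0 := sign_self_eq_sign_neg hsg
  refine ⟨haS, Or.inl ?_⟩
  linarith

lemma small_case {y u : ι →₀ ℚ} {i : ℕ}
    (hsepU : sep c u ≤ i) (hsepV : sep c (y - u) ≤ i)
    (heU : ∀ a ∈ u.support, eQ (u a) < i)
    (hdata : ∀ σ : Fin i → Bool, cData c u i σ = cData c (y - u) i σ)
    {a : ι} (ha : a ∈ u.support) :
    a ∈ y.support ∧ (u a = y a / 2 ∨ ∃ b ∈ y.support, u a = y b) := by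
  set σa : Fin i → Bool := fun j => c a j.val with hσa
  have haX : a ∈ cls c u i σa := self_mem_cls c ha i
  have hXne : (cls c u i σa).Nonempty := ⟨a, haX⟩
  have hXs : cls c u i σa = {a} := cls_eq_singleton_of_sep c hsepU haX
  have hd := hdata σa
  have hYne : (cls c (y - u) i σa).Nonempty := cls_nonempty_of_cData c hXne hd
  obtain ⟨b, hbY⟩ := hYne
  have hYs : cls c (y - u) i σa = {b} := cls_eq_singleton_of_sep c hsepV hbY
  rw [cData_singleton c hXs, cData_singleton c hYs] at hd
  have hp := Option.some.inj hd
  have hAB : aData i u a = aData i (y - u) b := congrArg Prod.fst hp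
  have hcap : min (eQ (u a)) i = min (eQ ((y - u) b)) i := by
    have := congrArg (fun p => (Prod.snd p).val) hAB
    simpa [aData] using this
  have h1 : eQ (u a) < i := heU a ha
  have h2 : eQ ((y - u) b) = eQ (u a) := by
    rcases le_or_gt i (eQ ((y - u) b)) with hbi | hbi
    · rw [min_eq_left h1.le, min_eq_right hbi] at hcap
      omega
    · rw [min_eq_left h1.le, min_eq_left hbi.le] at hcap
      omega
  have hvb : (y - u) b = u a := eQ.injective h2
  have hbsupp : b ∈ (y - u).support := ((mem_cls c).mp hbY).1
  have hua : u a ≠ 0 := Finsupp.mem_support_iff.mp ha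
  by_cases hab : a = b
  · subst hab
    have hyeq : y a - u a = u a := by rw [← Finsupp.sub_apply]; exact hvb
    have hya : y a ≠ 0 := by intro h0; rw [h0] at hyeq; apply hua; linarith
    exact ⟨Finsupp.mem_support_iff.mpr hya, Or.inl (by linarith)⟩
  · have hbU : b ∉ u.support := by
      intro hbu
      have hbc : b ∈ cls c u i σa := (mem_cls c).mpr ⟨hbu, ((mem_cls c).mp hbY).2⟩
      rw [hXs] at hbc
      exact hab (Finset.mem_singleton.mp hbc).symm
    have hub : u b = 0 := Finsupp.notMem_support_iff.mp hbU
    have hyb : y b = u a := by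
      have := hvb
      rw [Finsupp.sub_apply, hub, sub_zero] at this
      exact this
    have hbY' : b ∈ y.support := Finsupp.mem_support_iff.mpr (by rw [hyb]; exact hua)
    have haV : a ∉ (y - u).support := by
      intro hav
      have hac : a ∈ cls c (y - u) i σa := (mem_cls c).mpr ⟨hav, fun j => rfl⟩
      rw [hYs] at hac
      exact hab (Finset.mem_singleton.mp hac)
    have hva0 : y a - u a = 0 := by
      have := Finsupp.notMem_support_iff.mp haV
      rwa [Finsupp.sub_apply] at this
    have hya : y a ≠ 0 := by intro h0; apply hua; linarith
    exact ⟨Finsupp.mem_support_iff.mpr hya, Or.inr ⟨b, hbY', hyb.symm⟩⟩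

lemma cData_zero (i : ℕ) (σ : Fin i → Bool) : cData c 0 i σ = none := by
  unfold cData
  rw [dif_neg]
  intro ⟨x, hx⟩
  have := ((mem_cls c).mp hx).1
  simp at this

lemma core_lemma {y u : ι →₀ ℚ} (h : ∀ i ≤ Mu c y, fdef c u i = fdef c (y - u) i) :
    u.support ⊆ y.support ∧
      ∀ a ∈ u.support, u a = y a / 2 ∨ ∃ b ∈ y.support, u a = y b := by
  by_cases hu0 : u = 0
  · subst hu0
    simp
  have hv0 : y - u ≠ 0 := by
    intro h0
    have h1 := h 0 (Nat.zero_le _)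
    rw [h0] at h1
    have h2 : fdef c u 0 = fun _ => none := by
      rw [h1]
      by_cases hM : 0 < Mu c (0 : ι →₀ ℚ)
      · rw [fdef_eval c hM]
        funext σ
        exact cData_zero c 0 σ
      · exact fdef_eval_none c hM
    exact fdef_ne_none c hu0 (by have := two_le_Mu c u; omega) h2
  have hdata_of : ∀ i, i < Mu c u → i < Mu c (y - u) → i ≤ Mu c y →
      ∀ σ : Fin i → Bool, cData c u i σ = cData c (y - u) i σ := by
    intro i hiU hiV hin σ
    have hfe := h i hin
    rw [fdef_eval c hiU, fdef_eval c hiV] at hfe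
    exact congrFun hfe σ
  rcases M_pattern c hu0 hv0 h with ⟨hMeq, hMle⟩ | ⟨hnU, hnV⟩
  · -- small case
    set i := Mu c u - 1 with hidef
    have h2M := two_le_Mu c u
    have hiU : i < Mu c u := by omega
    have hiV : i < Mu c (y - u) := by omega
    have hin : i ≤ Mu c y := by omega
    have hsepU : sep c u ≤ i := by
      have : Mu c u = sep c u + supE u + eQ 0 + 2 := rfl
      omega
    have hsepV : sep c (y - u) ≤ i := by
      have h3 : Mu c (y - u) = sep c (y - u) + supE (y - u) + eQ 0 + 2 := rfl
      omega
    have heU : ∀ a ∈ u.support, eQ (u a) < i := by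
      intro a ha
      have h4 := supE_spec ha
      have : Mu c u = sep c u + supE u + eQ 0 + 2 := rfl
      omega
    have hdata := hdata_of i hiU hiV hin
    exact ⟨fun a ha => (small_case c hsepU hsepV heU hdata ha).1,
      fun a ha => (small_case c hsepU hsepV heU hdata ha).2⟩
  · -- big case
    set i := Mu c y with hidef
    have hdata := hdata_of i hnU hnV (le_refl _)
    have hsepY : sep c y ≤ i := by
      have : Mu c y = sep c y + supE y + eQ 0 + 2 := rfl
      omega
    have hm0 : eQ 0 ≤ i := by
      have : Mu c y = sep c y + supE y + eQ 0 + 2 := rfl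
      omega
    have heY : ∀ b ∈ y.support, eQ (y b) ≤ i := by
      intro b hb
      have h4 := supE_spec hb
      have : Mu c y = sep c y + supE y + eQ 0 + 2 := rfl
      omega
    exact ⟨fun a ha => (big_case c hsepY hm0 heY hdata ha).1,
      fun a ha => (big_case c hsepY hm0 heY hdata ha).2⟩

lemma Ufin_finite (y : ι →₀ ℚ) :
    {u : ι →₀ ℚ | u.support ⊆ y.support ∧
      ∀ a ∈ u.support, u a = y a / 2 ∨ ∃ b ∈ y.support, u a = y b}.Finite := by
  classical
  set S := y.support with hS
  set V : Finset ℚ := insert 0 ((S.image fun b => y b / 2) ∪ (S.image fun b => y b))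
    with hV
  set Φ : ({a // a ∈ S} → {q // q ∈ V}) → (ι →₀ ℚ) := fun φ =>
    Finsupp.onFinset S (fun a => if h : a ∈ S then (φ ⟨a, h⟩ : ℚ) else 0)
      (fun a hne => by
        by_cases h : a ∈ S
        · exact h
        · simp [h] at hne) with hΦ
  apply Set.Finite.subset (Set.finite_range Φ)
  intro u hu
  obtain ⟨hsupp, hval⟩ := hu
  have hmem : ∀ a : ι, u a ∈ V := by
    intro a
    by_cases ha : a ∈ u.support
    · rcases hval a ha with h1 | ⟨b, hb, h2⟩
      · exact Finset.mem_insert_of_mem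
          (Finset.mem_union_left _ (Finset.mem_image.mpr ⟨a, hsupp ha, h1.symm⟩))
      · exact Finset.mem_insert_of_mem
          (Finset.mem_union_right _ (Finset.mem_image.mpr ⟨b, hb, h2.symm⟩))
    · rw [Finsupp.notMem_support_iff.mp ha]
      exact Finset.mem_insert_self _ _
  refine ⟨fun a => ⟨u a.val, hmem a.val⟩, ?_⟩
  apply Finsupp.ext
  intro a
  by_cases ha : a ∈ S
  · simp [hΦ, Finsupp.onFinset_apply, ha]
  · have : a ∉ u.support := fun h => ha (hsupp h)
    rw [Finsupp.notMem_support_iff.mp this]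
    simp [hΦ, Finsupp.onFinset_apply, ha]

end Core

def extT (M : ℕ) (tpl : ∀ j : Fin M, SpaceF j.val) : T :=
  fun i => if h : i < M then tpl ⟨i, h⟩ else (fun _ => none)

def T0 : Set T := ⋃ M : ℕ, Set.range (extT M)

lemma T0_countable : T0.Countable :=
  Set.countable_iUnion (fun M => (Set.finite_range _).countable)

lemma fdef_mem_T0 {ι : Type} [LinearOrder ι] (c : ι ↪ (ℕ → Bool)) (u : ι →₀ ℚ) :
    fdef c u ∈ T0 := by
  apply Set.mem_iUnion.mpr
  refine ⟨Mu c u, ⟨fun j => fun σ => cData c u j.val σ, ?_⟩⟩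
  funext i
  unfold extT fdef
  by_cases h : i < Mu c u
  · rw [dif_pos h, if_pos h]
  · rw [dif_neg h, if_neg h]

/-- Dedekind-cut embedding of the reals into `ℚ → Bool`. -/
def cut (x : ℝ) : ℚ → Bool := fun q => decide ((q : ℝ) < x)

lemma cut_inj : Function.Injective cut := by
  have key : ∀ x y : ℝ, x < y → cut x ≠ cut y := by
    intro x y hlt hxy
    obtain ⟨q, hq1, hq2⟩ := exists_rat_btwn hlt
    have h := congrFun hxy q
    simp only [cut, decide_eq_decide] at h
    exact absurd (h.mpr hq2) (not_lt.mpr hq1.le)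
  intro x y hxy
  by_contra hne
  rcases lt_or_gt_of_ne hne with h | h
  · exact key x y h hxy
  · exact key y x h hxy.symm

def realEmb : ℝ ↪ (ℕ → Bool) :=
  (⟨cut, cut_inj⟩ : ℝ ↪ (ℚ → Bool)).trans
    (Equiv.arrowCongr eQ (Equiv.refl Bool)).toEmbedding

end SymmAux


/-- There exist a compact metric space `T`, a countable subset `T₀ ⊆ T`, and a
function `g : ℝ → T` with range contained in `T₀`, such that for every `x ∈ ℝ`
there exists `δ > 0` for which `{s : dist (g (x - s)) (g (x + s)) < δ}` is finite. -/
theorem exists_compact_metric_valued_function_with_finite_symmetric_sets :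
    ∃ (T : Type) (m : MetricSpace T) (T₀ : Set T) (g : ℝ → T),
      @CompactSpace T m.toUniformSpace.toTopologicalSpace ∧
      T₀.Countable ∧ Set.range g ⊆ T₀ ∧
      ∀ x : ℝ, ∃ δ : ℝ, 0 < δ ∧
        {s : ℝ | @dist T m.toDist (g (x - s)) (g (x + s)) < δ}.Finite := by
  classical
  set B := Module.Basis.ofVectorSpace ℚ ℝ with hB
  set c : (Module.Basis.ofVectorSpaceIndex ℚ ℝ) ↪ (ℕ → Bool) :=
    (Function.Embedding.subtype _).trans SymmAux.realEmb with hc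
  refine ⟨SymmAux.T, SymmAux.metricT, SymmAux.T0, fun t => SymmAux.fdef c (B.repr t), ?_,
    SymmAux.T0_countable, ?_, ?_⟩
  · letI tE : ∀ i, TopologicalSpace (SymmAux.SpaceF i) :=
      fun i => (inferInstance : UniformSpace (SymmAux.SpaceF i)).toTopologicalSpace
    exact @Pi.compactSpace ℕ SymmAux.SpaceF tE
      (fun i => @Finite.compactSpace _ (tE i) (by infer_instance))
  · rintro t ⟨x, rfl⟩
    exact SymmAux.fdef_mem_T0 c _
  · intro x
    set y := B.repr (x + x) with hy
    refine ⟨(1/2 : ℝ) ^ (SymmAux.Mu c y), by positivity, ?_⟩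
    have hinj : Function.Injective (fun s : ℝ => B.repr (x - s)) := by
      intro s1 s2 h12
      have h3 := B.repr.injective h12
      have : x - s1 = x - s2 := h3
      linarith
    apply Set.Finite.subset (Set.Finite.preimage hinj.injOn (SymmAux.Ufin_finite y))
    intro s hs
    simp only [Set.mem_preimage, Set.mem_setOf_eq]
    set u := B.repr (x - s) with hu
    have hyu : y - u = B.repr (x + s) := by
      rw [hy, hu, ← map_sub]
      congr 1
      ring
    apply SymmAux.core_lemma c
    intro i hi
    rw [hyu]
    exact PiNat.apply_eq_of_dist_lt hs hi
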